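/- The minimum achievable expected logarithmic loss using M codewords with pmf-valued reconstructions is D*(M) = H(X) − max over functions f: 𝒳 → {1,…,M} of H(f(X)). -/

import Mathlib

open Real Finset

set_option linter.unusedSectionVars false

private lemma sum_log_fiber {α : Type*} [Fintype α] [DecidableEq α] {M : ℕ}
    (pX : α → ℝ) (f : α → Fin M) :
    ∑ x, pX x * Real.log (∑ y ∈ univ.filter (fun y => f y = f x), pX y)
      = - ∑ m, negMulLog (∑ x ∈ univ.filter (fun x => f x = m), pX x) := by
  classical
  rw [← Finset.sum_fiberwise univ f
    (fun x => pX x * Real.log (∑ y ∈ univ.filter (fun y => f y = f x), pX y))]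
  rw [← Finset.sum_neg_distrib]
  refine Finset.sum_congr rfl fun m _ => ?_
  have : ∀ x ∈ univ.filter (fun x => f x = m),
      pX x * Real.log (∑ y ∈ univ.filter (fun y => f y = f x), pX y)
        = pX x * Real.log (∑ y ∈ univ.filter (fun y => f y = m), pX y) := by
    intro x hx
    rw [Finset.mem_filter] at hx
    rw [hx.2]
  rw [Finset.sum_congr rfl this, ← Finset.sum_mul, negMulLog]
  ring

private lemma fiber_pos {α : Type*} [Fintype α] [DecidableEq α] {M : ℕ}
    (pX : α → ℝ) (hp0 : ∀ x, 0 < pX x) (f : α → Fin M) (x : α) :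
    0 < ∑ y ∈ univ.filter (fun y => f y = f x), pX y :=
  Finset.sum_pos (fun y _ => hp0 y) ⟨x, by simp⟩

private lemma gibbs_bound {α : Type*} [Fintype α] [DecidableEq α] {M : ℕ}
    (pX : α → ℝ) (hp0 : ∀ x, 0 < pX x) (hp1 : ∑ x, pX x = 1)
    (f : α → Fin M) (q : Fin M → α → ℝ)
    (hq0 : ∀ m x, 0 ≤ q m x) (hq1 : ∀ m, ∑ x, q m x = 1)
    (hqpos : ∀ x, 0 < q (f x) x) :
    (∑ x, negMulLog (pX x))
        - ∑ m, negMulLog (∑ x ∈ univ.filter (fun x => f x = m), pX x)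
      ≤ ∑ x, pX x * (-Real.log (q (f x) x)) := by
  classical
  set P : Fin M → ℝ := fun m => ∑ x ∈ univ.filter (fun x => f x = m), pX x with hP
  set b : α → ℝ := fun x => q (f x) x * P (f x) with hb
  have hbpos : ∀ x, 0 < b x := fun x =>
    mul_pos (hqpos x) (fiber_pos pX hp0 f x)
  have key : ∀ x, pX x * Real.log (b x) - pX x * Real.log (pX x) ≤ b x - pX x := by
    intro x
    have h1 : Real.log (b x / pX x) ≤ b x / pX x - 1 :=
      Real.log_le_sub_one_of_pos (div_pos (hbpos x) (hp0 x))
    have h2 : Real.log (b x / pX x) = Real.log (b x) - Real.log (pX x) :=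
      Real.log_div (hbpos x).ne' (hp0 x).ne'
    have h4 := mul_le_mul_of_nonneg_left h1 (hp0 x).le
    rw [h2] at h4
    have h3 : pX x * (b x / pX x - 1) = b x - pX x := by
      field_simp [(hp0 x).ne']
    rw [h3] at h4
    linarith [h4]
  have hsumb : ∑ x, b x ≤ 1 := by
    have heq : ∑ x, b x = ∑ m, ∑ x ∈ univ.filter (fun x => f x = m), q m x * P m := by
      rw [← Finset.sum_fiberwise univ f b]
      refine Finset.sum_congr rfl fun m _ => Finset.sum_congr rfl fun x hx => ?_
      rw [Finset.mem_filter] at hx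
      simp [hb, hx.2]
    rw [heq]
    have step : ∀ m : Fin M, ∑ x ∈ univ.filter (fun x => f x = m), q m x * P m ≤ P m := by
      intro m
      rw [← Finset.sum_mul]
      have h1 : ∑ x ∈ univ.filter (fun x => f x = m), q m x ≤ 1 := by
        rw [← hq1 m]
        exact Finset.sum_le_sum_of_subset_of_nonneg (Finset.filter_subset _ _)
          (fun x _ _ => hq0 m x)
      have h2 : 0 ≤ P m := Finset.sum_nonneg fun x _ => (hp0 x).le
      calc (∑ x ∈ univ.filter (fun x => f x = m), q m x) * P m ≤ 1 * P m :=
            mul_le_mul_of_nonneg_right h1 h2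
        _ = P m := one_mul _
    calc ∑ m, ∑ x ∈ univ.filter (fun x => f x = m), q m x * P m
        ≤ ∑ m, P m := Finset.sum_le_sum fun m _ => step m
      _ = ∑ x, pX x := Finset.sum_fiberwise univ f pX
      _ = 1 := hp1
  have hsumkey : ∑ x, pX x * Real.log (b x) - ∑ x, pX x * Real.log (pX x) ≤ 0 := by
    have h5 := Finset.sum_le_sum (fun x (_ : x ∈ (univ : Finset α)) => key x)
    rw [Finset.sum_sub_distrib, Finset.sum_sub_distrib] at h5
    rw [hp1] at h5
    linarith
  have hlogb : ∀ x, Real.log (b x) = Real.log (q (f x) x) + Real.log (P (f x)) :=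
    fun x => Real.log_mul (hqpos x).ne' (fiber_pos pX hp0 f x).ne'
  have expand : ∑ x, pX x * Real.log (b x)
      = ∑ x, pX x * Real.log (q (f x) x) + ∑ x, pX x * Real.log (P (f x)) := by
    rw [← Finset.sum_add_distrib]
    exact Finset.sum_congr rfl fun x _ => by rw [hlogb x]; ring
  have hfib : ∑ x, pX x * Real.log (P (f x))
      = - ∑ m, negMulLog (P m) := sum_log_fiber pX f
  have hH : ∑ x, pX x * Real.log (pX x) = - ∑ x, negMulLog (pX x) := by
    rw [← Finset.sum_neg_distrib]
    refine Finset.sum_congr rfl fun x _ => ?_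
    simp only [negMulLog]
    ring
  have hE : ∑ x, pX x * (-Real.log (q (f x) x))
      = - ∑ x, pX x * Real.log (q (f x) x) := by
    rw [← Finset.sum_neg_distrib]
    exact Finset.sum_congr rfl fun x _ => by ring
  rw [hE]
  rw [expand, hfib, hH] at hsumkey
  linarith

theorem stmt_10 {α : Type*} [Fintype α] [DecidableEq α] (M : ℕ) (hM : 0 < M)
    (pX : α → ℝ) (hp0 : ∀ x, 0 < pX x) (hp1 : ∑ x, pX x = 1) :
    IsLeast { E : ℝ | ∃ (f : α → Fin M) (q : Fin M → α → ℝ),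
        (∀ m x, 0 ≤ q m x) ∧ (∀ m, ∑ x, q m x = 1) ∧
        (∀ x, 0 < q (f x) x) ∧                  -- finite log loss on the source
        E = ∑ x, pX x * (-Real.log (q (f x) x)) }
      ((∑ x, negMulLog (pX x))
        - sSup { h : ℝ | ∃ f : α → Fin M,
            h = ∑ m, negMulLog (∑ x ∈ univ.filter (fun x => f x = m), pX x) }) := by
  classical
  set S : Set ℝ := { h : ℝ | ∃ f : α → Fin M,
      h = ∑ m, negMulLog (∑ x ∈ univ.filter (fun x => f x = m), pX x) } with hSdef
  have hSne : S.Nonempty := ⟨_, fun _ => ⟨0, hM⟩, rfl⟩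
  have hSfin : S.Finite := by
    have hR : S = Set.range (fun f : α → Fin M =>
        ∑ m, negMulLog (∑ x ∈ univ.filter (fun x => f x = m), pX x)) := by
      ext h
      constructor
      · rintro ⟨f, rfl⟩; exact ⟨f, rfl⟩
      · rintro ⟨f, rfl⟩; exact ⟨f, rfl⟩
    rw [hR]; exact Set.finite_range _
  have hbdd : BddAbove S := hSfin.bddAbove
  constructor
  · obtain ⟨f₀, hf₀⟩ : sSup S ∈ S := hSne.csSup_mem hSfin
    set P : Fin M → ℝ := fun m => ∑ x ∈ univ.filter (fun x => f₀ x = m), pX x with hP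
    set q0 : Fin M → α → ℝ := fun m x => if P m = 0 then pX x else
        (if f₀ x = m then pX x / P m else 0) with hq0def
    have hPnn : ∀ m, 0 ≤ P m := fun m => Finset.sum_nonneg fun y _ => (hp0 y).le
    have hPfpos : ∀ x, 0 < P (f₀ x) := fiber_pos pX hp0 f₀
    refine ⟨f₀, q0, ?_, ?_, ?_, ?_⟩
    · intro m x
      simp only [hq0def]
      split_ifs with h1 h2
      · exact (hp0 x).le
      · exact div_nonneg (hp0 x).le (hPnn m)
      · exact le_refl 0
    · intro m
      simp only [hq0def]
      by_cases h : P m = 0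
      · simp only [h, if_true]; exact hp1
      · simp only [h, if_false]
        rw [← Finset.sum_filter, ← Finset.sum_div]
        exact div_self h
    · intro x
      simp only [hq0def, (hPfpos x).ne', if_false, if_pos rfl]
      exact div_pos (hp0 x) (hPfpos x)
    · have hpt : ∀ x, pX x * (-Real.log (q0 (f₀ x) x))
          = negMulLog (pX x) + pX x * Real.log (P (f₀ x)) := by
        intro x
        simp only [hq0def, (hPfpos x).ne', if_false, eq_self_iff_true, if_true]
        rw [Real.log_div (hp0 x).ne' (hPfpos x).ne']
        simp only [negMulLog]
        ring
      rw [Finset.sum_congr rfl (fun x _ => hpt x), Finset.sum_add_distrib]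
      have hfib : ∑ x, pX x * Real.log (P (f₀ x)) = - ∑ m, negMulLog (P m) :=
        sum_log_fiber pX f₀
      have hf₀' : sSup S = ∑ m, negMulLog (P m) := hf₀
      rw [hfib, hf₀']
      ring
  · rintro E ⟨f, q, hq0, hq1, hqpos, rfl⟩
    have hmem : (∑ m, negMulLog (∑ x ∈ univ.filter (fun x => f x = m), pX x)) ∈ S :=
      ⟨f, rfl⟩
    have hle : (∑ m, negMulLog (∑ x ∈ univ.filter (fun x => f x = m), pX x)) ≤ sSup S :=
      le_csSup hbdd hmem
    have hg := gibbs_bound pX hp0 hp1 f q hq0 hq1 hqpos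
    linarith
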